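/- arXiv:1909.09667 — 3 statements merged into one kernel-verified Lean document; each statement's English description precedes it below -/
import Mathlib

section
/- Two binary hierarchies T₁ and T₂ on the same leaf set X with |X| ≥ 3 are isomorphic (induce the same set of clusters) if and only if Trip(T₁) = Trip(T₂). -/
/-- A binary hierarchy: a binary tree with labeled leaves. -/
inductive BTree (α : Type) : Type where
  | leaf : α → BTree α
  | node : BTree α → BTree α → BTree α

namespace BTree

variable {α : Type} [DecidableEq α]

/-- The list of leaves of a binary tree. -/
def leaves : BTree α → List α
  | .leaf a => [a]
  | .node l r => l.leaves ++ r.leaves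

/-- Number of leaves. -/
def size (t : BTree α) : ℕ := t.leaves.length

/-- The subtree rooted at the least common ancestor of leaves `i` and `j`. -/
def lca : BTree α → α → α → BTree α
  | .leaf a, _, _ => .leaf a
  | .node l r, i, j =>
    if i ∈ l.leaves ∧ j ∈ l.leaves then l.lca i j
    else if i ∈ r.leaves ∧ j ∈ r.leaves then r.lca i j
    else .node l r

/-- All subtrees of a binary tree. -/
def subtrees : BTree α → List (BTree α)
  | .leaf a => [.leaf a]
  | .node l r => .node l r :: (l.subtrees ++ r.subtrees)

end BTree

/-- Unordered pairs (represented as ordered pairs `p.1 < p.2`) of leaves of a tree on `ℕ`. -/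
def leafPairs (t : BTree ℕ) : Finset (ℕ × ℕ) :=
  (t.leaves.toFinset ×ˢ t.leaves.toFinset).filter (fun p => p.1 < p.2)

/-- Total intra-tree similarity `w(T) = ∑_{i<j ∈ leaves(T)} w i j`. -/
noncomputable def wsum (w : ℕ → ℕ → ℝ) (t : BTree ℕ) : ℝ :=
  ∑ p ∈ leafPairs t, w p.1 p.2

/-- Dasgupta cost of hierarchy `t`. -/
noncomputable def dasguptaCost (w : ℕ → ℕ → ℝ) (t : BTree ℕ) : ℝ :=
  ∑ p ∈ leafPairs t, w p.1 p.2 * ((t.lca p.1 p.2).size : ℝ)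

/-- Moseley–Wang revenue of hierarchy `t` (complement within the leaf set of `t`). -/
noncomputable def mwRev (w : ℕ → ℕ → ℝ) (t : BTree ℕ) : ℝ :=
  ∑ p ∈ leafPairs t, w p.1 p.2 * ((t.size - (t.lca p.1 p.2).size : ℕ) : ℝ)

/-- The triplet set of a hierarchy on `ℕ`-labeled leaves: ordered triples of
distinct leaves `(i,j,k)` with `k ∉ leaves(lca(i,j))`. -/
def trip (t : BTree ℕ) : Finset (ℕ × ℕ × ℕ) :=
  ((t.leaves.toFinset ×ˢ t.leaves.toFinset ×ˢ t.leaves.toFinset).filter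
    (fun p => p.1 ≠ p.2.1 ∧ p.1 ≠ p.2.2 ∧ p.2.1 ≠ p.2.2 ∧
      p.2.2 ∉ (t.lca p.1 p.2.1).leaves))

/-- The family of clusters induced by a hierarchy: the leaf sets of all its subtrees. -/
def clusters (t : BTree ℕ) : Finset (Finset ℕ) :=
  (t.subtrees.map (fun s => s.leaves.toFinset)).toFinset

namespace BTree

variable {α : Type} [DecidableEq α]

lemma leaves_ne_nil (t : BTree α) : t.leaves ≠ [] := by
  induction t with
  | leaf a => simp [leaves]
  | node l r ihl ihr => simp only [leaves, ne_eq, List.append_eq_nil_iff]; tauto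

lemma self_mem_subtrees (t : BTree α) : t ∈ t.subtrees := by
  cases t <;> simp [subtrees]

lemma leaves_subset_of_mem_subtrees (t : BTree α) :
    ∀ s ∈ t.subtrees, ∀ x ∈ s.leaves, x ∈ t.leaves := by
  induction t with
  | leaf a => intro s hs; simp [subtrees] at hs; subst hs; exact fun x h => h
  | node l r ihl ihr =>
    intro s hs
    simp only [subtrees, List.mem_cons, List.mem_append] at hs
    rcases hs with h | h | h
    · subst h; exact fun x h => h
    · intro x hx; simp only [leaves, List.mem_append]; exact Or.inl (ihl s h x hx)
    · intro x hx; simp only [leaves, List.mem_append]; exact Or.inr (ihr s h x hx)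

lemma nodup_leaves_of_mem_subtrees (t : BTree α) (ht : t.leaves.Nodup) :
    ∀ s ∈ t.subtrees, s.leaves.Nodup := by
  induction t with
  | leaf a => intro s hs; simp [subtrees] at hs; subst hs; exact ht
  | node l r ihl ihr =>
    intro s hs
    simp only [leaves, List.nodup_append] at ht
    simp only [subtrees, List.mem_cons, List.mem_append] at hs
    rcases hs with h | h | h
    · subst h; simp only [leaves, List.nodup_append]; exact ht
    · exact ihl ht.1 s h
    · exact ihr ht.2.1 s h

lemma leaf_mem_subtrees (t : BTree α) {x : α} (hx : x ∈ t.leaves) :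
    BTree.leaf x ∈ t.subtrees := by
  induction t with
  | leaf a => simp [leaves] at hx; subst hx; simp [subtrees]
  | node l r ihl ihr =>
    simp only [leaves, List.mem_append] at hx
    simp only [subtrees, List.mem_cons, List.mem_append]
    rcases hx with h | h
    · exact Or.inr (Or.inl (ihl h))
    · exact Or.inr (Or.inr (ihr h))

lemma lca_mem_subtrees (t : BTree α) (i j : α) : t.lca i j ∈ t.subtrees := by
  induction t with
  | leaf a => simp [lca, subtrees]
  | node l r ihl ihr =>
    simp only [lca]
    split_ifs with h1 h2
    · simp only [subtrees, List.mem_cons, List.mem_append]; exact Or.inr (Or.inl ihl)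
    · simp only [subtrees, List.mem_cons, List.mem_append]; exact Or.inr (Or.inr ihr)
    · simp [subtrees]

lemma mem_lca (t : BTree α) {i j : α} (hi : i ∈ t.leaves) (hj : j ∈ t.leaves) :
    i ∈ (t.lca i j).leaves ∧ j ∈ (t.lca i j).leaves := by
  induction t with
  | leaf a => simpa [lca] using ⟨hi, hj⟩
  | node l r ihl ihr =>
    simp only [lca]
    split_ifs with h1 h2
    · exact ihl h1.1 h1.2
    · exact ihr h2.1 h2.2
    · exact ⟨hi, hj⟩

lemma lca_leaves_subset (t : BTree α) (ht : t.leaves.Nodup) :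
    ∀ s ∈ t.subtrees, ∀ i ∈ s.leaves, ∀ j ∈ s.leaves,
      ∀ x ∈ (t.lca i j).leaves, x ∈ s.leaves := by
  induction t with
  | leaf a =>
    intro s hs i hi j hj x hx
    simp [subtrees] at hs; subst hs; simpa [lca] using hx
  | node l r ihl ihr =>
    intro s hs i hi j hj x hx
    simp only [leaves, List.nodup_append] at ht
    have hdisj := ht.2.2
    simp only [subtrees, List.mem_cons, List.mem_append] at hs
    rcases hs with h | h | h
    · subst h
      exact leaves_subset_of_mem_subtrees _ _ (lca_mem_subtrees _ i j) x hx
    · -- s ∈ l.subtrees, so i,j ∈ l.leaves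
      have hil : i ∈ l.leaves := leaves_subset_of_mem_subtrees l s h i hi
      have hjl : j ∈ l.leaves := leaves_subset_of_mem_subtrees l s h j hj
      rw [lca, if_pos ⟨hil, hjl⟩] at hx
      exact ihl ht.1 s h i hi j hj x hx
    · have hir : i ∈ r.leaves := leaves_subset_of_mem_subtrees r s h i hi
      have hjr : j ∈ r.leaves := leaves_subset_of_mem_subtrees r s h j hj
      have hil : i ∉ l.leaves := fun hc => hdisj i hc i hir rfl
      rw [lca, if_neg (fun hc => hil hc.1), if_pos ⟨hir, hjr⟩] at hx
      exact ihr ht.2.1 s h i hi j hj x hx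

lemma lca_eq_of_split (t : BTree α) (ht : t.leaves.Nodup) :
    ∀ l r : BTree α, BTree.node l r ∈ t.subtrees →
      ∀ i ∈ l.leaves, ∀ j ∈ r.leaves, t.lca i j = BTree.node l r := by
  induction t with
  | leaf a => intro l r hs; simp [subtrees] at hs
  | node L R ihl ihr =>
    intro l r hs i hi j hj
    simp only [leaves, List.nodup_append] at ht
    have hdisj := ht.2.2
    simp only [subtrees, List.mem_cons, List.mem_append] at hs
    rcases hs with h | h | h
    · obtain ⟨h1, h2⟩ : l = L ∧ r = R := by
        injection h with ha hb; exact ⟨ha, hb⟩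
      rw [h1] at hi; rw [h2] at hj
      have hjL : j ∉ L.leaves := fun hc => hdisj j hc j hj rfl
      have hiR : i ∉ R.leaves := fun hc => hdisj i hi i hc rfl
      rw [lca, if_neg (fun hc => hjL hc.2), if_neg (fun hc => hiR hc.1), h1, h2]
    · have hsub := leaves_subset_of_mem_subtrees L _ h
      have hiL : i ∈ L.leaves := hsub i (by simp [leaves, hi])
      have hjL : j ∈ L.leaves := hsub j (by simp [leaves, hj])
      rw [lca, if_pos ⟨hiL, hjL⟩]
      exact ihl ht.1 l r h i hi j hj
    · have hsub := leaves_subset_of_mem_subtrees R _ h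
      have hiR : i ∈ R.leaves := hsub i (by simp [leaves, hi])
      have hjR : j ∈ R.leaves := hsub j (by simp [leaves, hj])
      have hiL : i ∉ L.leaves := fun hc => hdisj i hc i hiR rfl
      rw [lca, if_neg (fun hc => hiL hc.1), if_pos ⟨hiR, hjR⟩]
      exact ihr ht.2.1 l r h i hi j hj

/-- Minimal subtree containing a nonempty subset of leaves. -/
lemma exists_min_subtree (t : BTree α) (C : Finset α) (hne : C.Nonempty)
    (hsub : ∀ x ∈ C, x ∈ t.leaves) :
    ∃ s ∈ t.subtrees, (∀ x ∈ C, x ∈ s.leaves) ∧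
      ((∃ x, s = BTree.leaf x ∧ C = {x}) ∨
       (∃ l r, s = BTree.node l r ∧ (∃ i ∈ C, i ∈ l.leaves) ∧ (∃ j ∈ C, j ∈ r.leaves))) := by
  induction t with
  | leaf a =>
    refine ⟨BTree.leaf a, by simp [subtrees], hsub, Or.inl ⟨a, rfl, ?_⟩⟩
    apply Finset.eq_singleton_iff_nonempty_unique_mem.mpr
    refine ⟨hne, fun x hx => ?_⟩
    simpa [leaves] using hsub x hx
  | node l r ihl ihr =>
    by_cases hL : ∀ x ∈ C, x ∈ l.leaves
    · obtain ⟨s, hs, h2, h3⟩ := ihl hL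
      refine ⟨s, ?_, h2, h3⟩
      simp only [subtrees, List.mem_cons, List.mem_append]
      exact Or.inr (Or.inl hs)
    · by_cases hR : ∀ x ∈ C, x ∈ r.leaves
      · obtain ⟨s, hs, h2, h3⟩ := ihr hR
        refine ⟨s, ?_, h2, h3⟩
        simp only [subtrees, List.mem_cons, List.mem_append]
        exact Or.inr (Or.inr hs)
      · push_neg at hL hR
        obtain ⟨j, hjC, hjl⟩ := hL
        obtain ⟨i, hiC, hir⟩ := hR
        have hjr : j ∈ r.leaves := by
          have := hsub j hjC; simp only [leaves, List.mem_append] at this; tauto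
        have hil : i ∈ l.leaves := by
          have := hsub i hiC; simp only [leaves, List.mem_append] at this; tauto
        exact ⟨BTree.node l r, self_mem_subtrees _, hsub,
          Or.inr ⟨l, r, rfl, ⟨i, hiC, hil⟩, ⟨j, hjC, hjr⟩⟩⟩

end BTree

open BTree

lemma mem_clusters {t : BTree ℕ} {C : Finset ℕ} :
    C ∈ clusters t ↔ ∃ s ∈ t.subtrees, s.leaves.toFinset = C := by
  simp [clusters]

lemma mem_trip {t : BTree ℕ} {i j k : ℕ} :
    (i, j, k) ∈ trip t ↔ (i ∈ t.leaves ∧ j ∈ t.leaves ∧ k ∈ t.leaves) ∧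
      (i ≠ j ∧ i ≠ k ∧ j ≠ k) ∧ k ∉ (t.lca i j).leaves := by
  simp only [trip, Finset.mem_filter, Finset.mem_product, List.mem_toFinset]
  tauto

lemma trip_char (t : BTree ℕ) (ht : t.leaves.Nodup) (i j k : ℕ) :
    (i, j, k) ∈ trip t ↔ (i ∈ t.leaves ∧ j ∈ t.leaves ∧ k ∈ t.leaves) ∧
      (i ≠ j ∧ i ≠ k ∧ j ≠ k) ∧ ∃ C ∈ clusters t, i ∈ C ∧ j ∈ C ∧ k ∉ C := by
  rw [mem_trip]
  constructor
  · rintro ⟨hmem, hne, hk⟩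
    refine ⟨hmem, hne, (t.lca i j).leaves.toFinset,
      mem_clusters.mpr ⟨t.lca i j, lca_mem_subtrees t i j, rfl⟩, ?_, ?_, ?_⟩
    · exact List.mem_toFinset.mpr (t.mem_lca hmem.1 hmem.2.1).1
    · exact List.mem_toFinset.mpr (t.mem_lca hmem.1 hmem.2.1).2
    · exact fun hc => hk (List.mem_toFinset.mp hc)
  · rintro ⟨hmem, hne, C, hC, hiC, hjC, hkC⟩
    obtain ⟨s, hs, rfl⟩ := mem_clusters.mp hC
    refine ⟨hmem, hne, fun hc => hkC ?_⟩
    exact List.mem_toFinset.mpr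
      (t.lca_leaves_subset ht s hs i (List.mem_toFinset.mp hiC)
        j (List.mem_toFinset.mp hjC) k hc)

lemma cluster_char (t : BTree ℕ) (ht : t.leaves.Nodup) (C : Finset ℕ) :
    C ∈ clusters t ↔ C.Nonempty ∧ (∀ x ∈ C, x ∈ t.leaves) ∧
      ∀ i ∈ C, ∀ j ∈ C, i ≠ j → ∀ k ∈ t.leaves, k ∉ C → (i, j, k) ∈ trip t := by
  constructor
  · intro hC
    obtain ⟨s, hs, rfl⟩ := mem_clusters.mp hC
    obtain ⟨x, hx⟩ := List.exists_mem_of_ne_nil _ (leaves_ne_nil s)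
    refine ⟨⟨x, List.mem_toFinset.mpr hx⟩,
      fun y hy => t.leaves_subset_of_mem_subtrees s hs y (List.mem_toFinset.mp hy),
      fun i hi j hj hij k hk hkC => ?_⟩
    have hi' := List.mem_toFinset.mp hi
    have hj' := List.mem_toFinset.mp hj
    have hkC' : k ∉ s.leaves := fun hc => hkC (List.mem_toFinset.mpr hc)
    refine mem_trip.mpr ⟨⟨t.leaves_subset_of_mem_subtrees s hs i hi',
      t.leaves_subset_of_mem_subtrees s hs j hj', hk⟩,
      ⟨hij, fun h => hkC' (h ▸ hi'), fun h => hkC' (h ▸ hj')⟩, fun hc => hkC' ?_⟩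
    exact t.lca_leaves_subset ht s hs i hi' j hj' k hc
  · rintro ⟨hne, hsub, hcond⟩
    obtain ⟨s, hs, h2, h3⟩ := t.exists_min_subtree C hne hsub
    rcases h3 with ⟨x, rfl, rfl⟩ | ⟨l, r, rfl, ⟨i, hiC, hil⟩, ⟨j, hjC, hjr⟩⟩
    · exact mem_clusters.mpr ⟨BTree.leaf x, hs, by simp [leaves]⟩
    · have hnodup : (BTree.node l r).leaves.Nodup :=
        t.nodup_leaves_of_mem_subtrees ht _ hs
      simp only [leaves, List.nodup_append] at hnodup
      have hij : i ≠ j := fun h => hnodup.2.2 i hil i (h ▸ hjr) rfl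
      have hlca : t.lca i j = BTree.node l r := t.lca_eq_of_split ht l r hs i hil j hjr
      have hCs : C = (BTree.node l r).leaves.toFinset := by
        apply Finset.Subset.antisymm
        · exact fun y hy => List.mem_toFinset.mpr (h2 y hy)
        · intro k hk
          by_contra hkC
          have hk' : k ∈ t.leaves :=
            t.leaves_subset_of_mem_subtrees _ hs k (List.mem_toFinset.mp hk)
          have := mem_trip.mp (hcond i hiC j hjC hij k hk' hkC)
          exact this.2.2 (hlca ▸ List.mem_toFinset.mp hk)
      exact mem_clusters.mpr ⟨BTree.node l r, hs, hCs.symm⟩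

/-- Two binary hierarchies on the same leaf set of at least 3 points induce the
same set of clusters if and only if they have the same triplet set. -/
theorem clusters_eq_iff_trip_eq (n : ℕ) (hn : 3 ≤ n) (t₁ t₂ : BTree ℕ)
    (h₁ : t₁.leaves.Nodup) (h₂ : t₂.leaves.Nodup)
    (hl₁ : t₁.leaves.toFinset = Finset.range n)
    (hl₂ : t₂.leaves.toFinset = Finset.range n) :
    clusters t₁ = clusters t₂ ↔ trip t₁ = trip t₂ := by
  have hle : ∀ x, x ∈ t₁.leaves ↔ x ∈ t₂.leaves := by
    intro x
    rw [← List.mem_toFinset, ← List.mem_toFinset, hl₁, hl₂]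
  constructor
  · intro hcl
    apply Finset.ext
    rintro ⟨i, j, k⟩
    rw [trip_char t₁ h₁, trip_char t₂ h₂, hcl]
    simp only [hle]
  · intro htr
    apply Finset.ext
    intro C
    rw [cluster_char t₁ h₁, cluster_char t₂ h₂, htr]
    simp only [hle]
end

section
/- Given a dataset of three collinear points at positions 0, 1, and K > 2 on the real line with similarity w_{ij} = −|x_i − x_j|, the hierarchy that first merges the points at 1 and K (i.e., ((1,K),0)) achieves Moseley–Wang revenue −(K−1), while the optimal hierarchy ((0,1),K) achieves revenue −1; hence the ratio of revenues is unbounded as K → ∞. -/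
/-- Positions of the three collinear points `0`, `1`, `K`. -/
noncomputable def pos (K : ℝ) : ℕ → ℝ := fun i => if i = 0 then 0 else if i = 1 then 1 else K

/-- Similarity given by negated Euclidean distance between the positions. -/
noncomputable def wLine (K : ℝ) (i j : ℕ) : ℝ := -|pos K i - pos K j|

/-- For three collinear points at `0, 1, K` (`K > 2`) with similarity the negated
distance: the hierarchy `((1,K),0)` (produced by Naïve₂) has Moseley–Wang revenue
`−(K−1)`, the optimal hierarchy `((0,1),K)` has revenue `−1`, and the ratio
`(K−1)/1` of these (absolute) revenues is unbounded as `K → ∞`. -/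
theorem naive2_unbounded :
    (∀ K : ℝ, K > 2 →
      mwRev (wLine K) (BTree.node (BTree.node (BTree.leaf 1) (BTree.leaf 2)) (BTree.leaf 0))
        = -(K - 1)
      ∧ mwRev (wLine K) (BTree.node (BTree.node (BTree.leaf 0) (BTree.leaf 1)) (BTree.leaf 2))
        = -1)
    ∧ ∀ M : ℝ, ∃ K : ℝ, K > 2 ∧ (K - 1) / 1 > M := by
  constructor
  · intro K hK
    have h1 : |(0:ℝ) - 1| = 1 := by norm_num
    have h2 : |(0:ℝ) - K| = K := by rw [abs_sub_comm]; simp [abs_of_nonneg (by linarith : (0:ℝ) ≤ K)]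
    have h3 : |(1:ℝ) - K| = K - 1 := by rw [abs_sub_comm]; rw [abs_of_nonneg (by linarith : (0:ℝ) ≤ K - 1)]
    constructor
    · rw [mwRev, show leafPairs (BTree.node (BTree.node (BTree.leaf 1) (BTree.leaf 2)) (BTree.leaf 0)) = {(0,1),(0,2),(1,2)} from by decide]
      rw [show ({(0,1),(0,2),(1,2)} : Finset (ℕ × ℕ)) = insert (0,1) (insert (0,2) {(1,2)}) from rfl]
      rw [Finset.sum_insert (by decide), Finset.sum_insert (by decide), Finset.sum_singleton]
      simp only [wLine, pos, BTree.size, BTree.lca, BTree.leaves]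
      norm_num [h1, h2, h3, BTree.leaves, abs_of_pos (by linarith : (0:ℝ) < K)]
    · rw [mwRev, show leafPairs (BTree.node (BTree.node (BTree.leaf 0) (BTree.leaf 1)) (BTree.leaf 2)) = {(0,1),(0,2),(1,2)} from by decide]
      rw [show ({(0,1),(0,2),(1,2)} : Finset (ℕ × ℕ)) = insert (0,1) (insert (0,2) {(1,2)}) from rfl]
      rw [Finset.sum_insert (by decide), Finset.sum_insert (by decide), Finset.sum_singleton]
      simp only [wLine, pos, BTree.size, BTree.lca, BTree.leaves]
      norm_num [h1, h2, h3, BTree.leaves, abs_of_pos (by linarith : (0:ℝ) < K)]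
  · intro M
    refine ⟨max 3 (M + 2), lt_of_lt_of_le (by norm_num) (le_max_left _ _), ?_⟩
    have := le_max_right 3 (M + 2)
    rw [div_one]; linarith
end

section
/- Let T be a binary hierarchy satisfying the β-well-separatedness condition with respect to a new point x: for every subtree S of T with children A and B such that w̄(S,{x}) > w̄(S) and w̄(A,{x}) ≤ w̄(B,{x}), one has w̄(A) ≥ β·w̄(A,{x}). Then the revenue gain Δ^{OTD} of the OTD insertion of x into T satisfies Δ^{OTD} ≥ β·((n−1)/2)·w(T,{x}) whenever w̄(T,{x}) > w̄(T), where n is the number of leaves of T. (Proved by structural induction on T.) -/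
/-- Total similarity `w(T,{x}) = ∑_{i ∈ leaves(T)} w i x` of a new point `x` to tree `T`. -/
noncomputable def crossSum (w : ℕ → ℕ → ℝ) (t : BTree ℕ) (x : ℕ) : ℝ :=
  ∑ i ∈ t.leaves.toFinset, w i x

/-- Average intra-tree similarity `w̄(T) = w(T) / C(|T|, 2)`. -/
noncomputable def wbar (w : ℕ → ℕ → ℝ) (t : BTree ℕ) : ℝ :=
  wsum w t / (Nat.choose t.size 2 : ℝ)

/-- Average similarity `w̄(T,{x}) = w(T,{x}) / |T|` of point `x` to tree `T`. -/
noncomputable def wbarCross (w : ℕ → ℕ → ℝ) (t : BTree ℕ) (x : ℕ) : ℝ :=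
  crossSum w t x / (t.size : ℝ)

open Classical in
/-- The Moseley–Wang revenue gain of the OTD insertion of point `x` into tree `T`:
if `w̄(T) ≥ w̄(T,{x})` then `x` is attached as a sibling of the root, gaining `w(T)`;
otherwise OTD recurses into the child with larger average similarity to `x`, and
the gain decomposes as `Δ(node A B) = w(A) + |A|·w(B,{x}) + Δ(B)` when recursing
into `B` (symmetrically for `A`). -/
noncomputable def deltaOTD (w : ℕ → ℕ → ℝ) (x : ℕ) : BTree ℕ → ℝ
  | .leaf a => w a x
  | .node A B =>
    if wbar w (.node A B) ≥ wbarCross w (.node A B) x then wsum w (.node A B)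
    else if wbarCross w A x ≤ wbarCross w B x then
      wsum w A + (A.size : ℝ) * crossSum w B x + deltaOTD w x B
    else
      wsum w B + (B.size : ℝ) * crossSum w A x + deltaOTD w x A


section OTDaux

lemma size_pos (t : BTree ℕ) : 0 < t.size := by
  induction t with
  | leaf a => simp [BTree.size, BTree.leaves]
  | node l r ihl ihr =>
    simp only [BTree.size, BTree.leaves, List.length_append] at *
    omega

lemma size_node (A B : BTree ℕ) : (BTree.node A B).size = A.size + B.size := by
  simp [BTree.size, BTree.leaves]

lemma wsum_nonneg (w : ℕ → ℕ → ℝ) (hw : ∀ i j, 0 ≤ w i j) (t : BTree ℕ) :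
    0 ≤ wsum w t := Finset.sum_nonneg fun p _ => hw p.1 p.2

lemma crossSum_nonneg (w : ℕ → ℕ → ℝ) (hw : ∀ i j, 0 ≤ w i j) (t : BTree ℕ) (x : ℕ) :
    0 ≤ crossSum w t x := Finset.sum_nonneg fun i _ => hw i x

lemma crossSum_node (w : ℕ → ℕ → ℝ) (x : ℕ) (A B : BTree ℕ)
    (h : (BTree.node A B).leaves.Nodup) :
    crossSum w (BTree.node A B) x = crossSum w A x + crossSum w B x := by
  have hd : Disjoint A.leaves.toFinset B.leaves.toFinset := by
    rw [List.disjoint_toFinset_iff_disjoint]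
    exact (List.nodup_append'.mp h).2.2
  unfold crossSum
  show ∑ i ∈ (A.leaves ++ B.leaves).toFinset, w i x = _
  rw [List.toFinset_append, Finset.sum_union hd]

lemma child_bound (w : ℕ → ℕ → ℝ) (hw : ∀ i j, 0 ≤ w i j) (β : ℝ) (hβ0 : 0 ≤ β)
    (x : ℕ) (A : BTree ℕ) (h : wbar w A ≥ β * wbarCross w A x) :
    wsum w A ≥ β * (((A.size : ℝ) - 1) / 2) * crossSum w A x := by
  have ha : 0 < A.size := size_pos A
  rcases Nat.lt_or_ge A.size 2 with h1 | h2
  · have : A.size = 1 := by omega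
    rw [this]
    norm_num
    exact wsum_nonneg w hw A
  · have hC : (0 : ℝ) < (A.size.choose 2 : ℝ) := by
      exact_mod_cast Nat.choose_pos h2
    have ha' : (0 : ℝ) < (A.size : ℝ) := by exact_mod_cast ha
    have h' : β * (crossSum w A x / (A.size : ℝ)) * ((A.size.choose 2 : ℝ)) ≤ wsum w A := by
      rw [← le_div_iff₀ hC]
      exact h
    have hch : ((A.size.choose 2 : ℕ) : ℝ) = (A.size : ℝ) * ((A.size : ℝ) - 1) / 2 :=
      Nat.cast_choose_two (K := ℝ) A.size
    rw [hch] at h'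
    have heq : β * (crossSum w A x / (A.size : ℝ)) * ((A.size : ℝ) * ((A.size : ℝ) - 1) / 2)
        = β * (((A.size : ℝ) - 1) / 2) * crossSum w A x := by
      field_simp
    linarith [heq ▸ h']

lemma root_bound (w : ℕ → ℕ → ℝ) (hw : ∀ i j, 0 ≤ w i j) (β : ℝ) (hβ0 : 0 ≤ β) (hβ1 : β ≤ 1)
    (x : ℕ) (T : BTree ℕ) (h2 : 2 ≤ T.size) (h : wbar w T ≥ wbarCross w T x) :
    wsum w T ≥ β * (((T.size : ℝ) - 1) / 2) * crossSum w T x := by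
  have hC : (0 : ℝ) < (T.size.choose 2 : ℝ) := by exact_mod_cast Nat.choose_pos h2
  have ha' : (0 : ℝ) < (T.size : ℝ) := by exact_mod_cast size_pos T
  have h' : (crossSum w T x / (T.size : ℝ)) * ((T.size.choose 2 : ℝ)) ≤ wsum w T := by
    rw [← le_div_iff₀ hC]; exact h
  have hch : ((T.size.choose 2 : ℕ) : ℝ) = (T.size : ℝ) * ((T.size : ℝ) - 1) / 2 :=
    Nat.cast_choose_two (K := ℝ) T.size
  rw [hch] at h'
  have heq : (crossSum w T x / (T.size : ℝ)) * ((T.size : ℝ) * ((T.size : ℝ) - 1) / 2)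
      = (((T.size : ℝ) - 1) / 2) * crossSum w T x := by
    field_simp
  rw [heq] at h'
  have hc0 : 0 ≤ crossSum w T x := crossSum_nonneg w hw T x
  have hs1 : (1 : ℝ) ≤ (T.size : ℝ) := by exact_mod_cast size_pos T
  nlinarith [mul_nonneg (mul_nonneg (sub_nonneg.mpr hβ1) (by linarith : (0:ℝ) ≤ ((T.size : ℝ) - 1)/2)) hc0]

lemma otd_main (w : ℕ → ℕ → ℝ) (hw : ∀ i j, 0 ≤ w i j)
    (β : ℝ) (hβ0 : 0 ≤ β) (hβ1 : β ≤ 1) (x : ℕ) :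
    ∀ t : BTree ℕ, t.leaves.Nodup → x ∉ t.leaves →
    (∀ A B : BTree ℕ, BTree.node A B ∈ t.subtrees →
      wbarCross w (BTree.node A B) x > wbar w (BTree.node A B) →
      ((wbarCross w A x ≤ wbarCross w B x → wbar w A ≥ β * wbarCross w A x) ∧
       (wbarCross w B x ≤ wbarCross w A x → wbar w B ≥ β * wbarCross w B x))) →
    deltaOTD w x t ≥ β * (((t.size : ℝ) - 1) / 2) * crossSum w t x := by
  intro t
  induction t with
  | leaf a =>
    intro _ _ _
    show w a x ≥ β * (((BTree.size (BTree.leaf a) : ℝ) - 1) / 2) * _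
    have : (BTree.size (BTree.leaf a) : ℝ) = 1 := by
      simp [BTree.size, BTree.leaves]
    rw [this]
    norm_num
    exact hw a x
  | node A B ihA ihB =>
    intro hnodup hx hsep
    have hnodup' : (A.leaves ++ B.leaves).Nodup := hnodup
    obtain ⟨hnA, hnB, hdisj⟩ := List.nodup_append.mp hnodup'
    have hx' : x ∉ A.leaves ∧ x ∉ B.leaves := by
      constructor <;> intro hmem <;> exact hx (by
        show x ∈ A.leaves ++ B.leaves
        simp [hmem])
    have hsub : ∀ S, (S ∈ A.subtrees ∨ S ∈ B.subtrees) → S ∈ (BTree.node A B).subtrees := by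
      intro S hS
      show S ∈ BTree.node A B :: (A.subtrees ++ B.subtrees)
      rcases hS with h | h <;> simp [h]
    have hsepA : ∀ A' B' : BTree ℕ, BTree.node A' B' ∈ A.subtrees → _ := fun A' B' hm =>
      hsep A' B' (hsub _ (Or.inl hm))
    have hsepB : ∀ A' B' : BTree ℕ, BTree.node A' B' ∈ B.subtrees → _ := fun A' B' hm =>
      hsep A' B' (hsub _ (Or.inr hm))
    have hroot : BTree.node A B ∈ (BTree.node A B).subtrees := by
      show BTree.node A B ∈ BTree.node A B :: _
      exact List.mem_cons_self
    have hsize : ((BTree.node A B).size : ℝ) = (A.size : ℝ) + (B.size : ℝ) := by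
      rw [size_node]; push_cast; ring
    have hcross : crossSum w (BTree.node A B) x = crossSum w A x + crossSum w B x :=
      crossSum_node w x A B hnodup
    have ha' : (0 : ℝ) < (A.size : ℝ) := by exact_mod_cast size_pos A
    have hb' : (0 : ℝ) < (B.size : ℝ) := by exact_mod_cast size_pos B
    have hcA : 0 ≤ crossSum w A x := crossSum_nonneg w hw A x
    have hcB : 0 ≤ crossSum w B x := crossSum_nonneg w hw B x
    rw [deltaOTD]
    split_ifs with h1 h2
    · -- attach at root
      have h2s : 2 ≤ (BTree.node A B).size := by
        rw [size_node]
        have := size_pos A; have := size_pos B; omega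
      exact root_bound w hw β hβ0 hβ1 x _ h2s h1
    · -- recurse into B
      have hgt : wbarCross w (BTree.node A B) x > wbar w (BTree.node A B) := not_le.mp h1
      have hAb : wbar w A ≥ β * wbarCross w A x := (hsep A B hroot hgt).1 h2
      have hA : wsum w A ≥ β * (((A.size : ℝ) - 1) / 2) * crossSum w A x :=
        child_bound w hw β hβ0 x A hAb
      have hB : deltaOTD w x B ≥ β * (((B.size : ℝ) - 1) / 2) * crossSum w B x :=
        ihB hnB hx'.2 hsepB
      have hord : crossSum w A x * (B.size : ℝ) ≤ crossSum w B x * (A.size : ℝ) := by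
        have := h2
        unfold wbarCross at this
        exact (div_le_div_iff₀ ha' hb').mp this
      rw [hsize, hcross]
      have hbc : β * (crossSum w A x * (B.size : ℝ)) ≤ β * (crossSum w B x * (A.size : ℝ)) :=
        mul_le_mul_of_nonneg_left hord hβ0
      have hpos : 0 ≤ (1 - β) * ((A.size : ℝ) * crossSum w B x) :=
        mul_nonneg (by linarith) (mul_nonneg (le_of_lt ha') hcB)
      nlinarith [hA, hB, hbc, hpos]
    · -- recurse into A
      have hgt : wbarCross w (BTree.node A B) x > wbar w (BTree.node A B) := not_le.mp h1
      have hBb : wbar w B ≥ β * wbarCross w B x :=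
        (hsep A B hroot hgt).2 (le_of_lt (not_le.mp h2))
      have hBB : wsum w B ≥ β * (((B.size : ℝ) - 1) / 2) * crossSum w B x :=
        child_bound w hw β hβ0 x B hBb
      have hAA : deltaOTD w x A ≥ β * (((A.size : ℝ) - 1) / 2) * crossSum w A x :=
        ihA hnA hx'.1 hsepA
      have hord : crossSum w B x * (A.size : ℝ) ≤ crossSum w A x * (B.size : ℝ) := by
        have h2' : wbarCross w B x ≤ wbarCross w A x := le_of_lt (not_le.mp h2)
        unfold wbarCross at h2'
        exact (div_le_div_iff₀ hb' ha').mp h2'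
      rw [hsize, hcross]
      have hbc : β * (crossSum w B x * (A.size : ℝ)) ≤ β * (crossSum w A x * (B.size : ℝ)) :=
        mul_le_mul_of_nonneg_left hord hβ0
      have hpos : 0 ≤ (1 - β) * ((B.size : ℝ) * crossSum w A x) :=
        mul_nonneg (by linarith) (mul_nonneg (le_of_lt hb') hcA)
      nlinarith [hAA, hBB, hbc, hpos]

end OTDaux

/-- Under β-well-separatedness with respect to the new point `x`, whenever
`w̄(T,{x}) > w̄(T)` the OTD revenue gain satisfies
`Δ^{OTD} ≥ β·((n−1)/2)·w(T,{x})`, where `n` is the number of leaves of `T`. -/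
theorem otd_case2_induction (w : ℕ → ℕ → ℝ) (hw : ∀ i j, 0 ≤ w i j)
    (β : ℝ) (hβ0 : 0 ≤ β) (hβ1 : β ≤ 1)
    (t : BTree ℕ) (x : ℕ) (hnodup : t.leaves.Nodup) (hx : x ∉ t.leaves)
    (hsep : ∀ A B : BTree ℕ, BTree.node A B ∈ t.subtrees →
      wbarCross w (BTree.node A B) x > wbar w (BTree.node A B) →
      ((wbarCross w A x ≤ wbarCross w B x → wbar w A ≥ β * wbarCross w A x) ∧
       (wbarCross w B x ≤ wbarCross w A x → wbar w B ≥ β * wbarCross w B x)))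
    (hmain : wbarCross w t x > wbar w t) :
    deltaOTD w x t ≥ β * (((t.size : ℝ) - 1) / 2) * crossSum w t x := by
  exact otd_main w hw β hβ0 hβ1 x t hnodup hx hsep
end
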